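/- Let φ₁, …, φ_k (k ≥ 1) be reduction functions on a meet-semilattice D such that each φ_i is idempotent (φ_i ∘ φ_i = φ_i) and the φ_i are pairwise independent (for i ≠ j, φ_i(φ_j(x)) = φ_j(φ_i(x)) = φ_i(x) ⊓ φ_j(x) for all x). Then the decoupling map x ↦ φ₁(x) ⊓ φ₂(x) ⊓ ⋯ ⊓ φ_k(x) is idempotent. -/

import Mathlib

/-- Decoupling map `x ↦ f₁(x) ⊓ f₂(x) ⊓ ⋯ ⊓ f_k(x)` of a nonempty family of functions. -/
def decouple {D : Type*} [SemilatticeInf D] {k : ℕ} (hk : 0 < k)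
    (f : Fin k → D → D) (x : D) : D :=
  Finset.univ.inf' (Finset.univ_nonempty_iff.mpr (Fin.pos_iff_nonempty.mp hk))
    (fun i => f i x)

/-- Composition of a list of functions. -/
def decoupleComp {D : Type*} {k : ℕ} (φ : Fin k → D → D) (l : List (Fin k)) (x : D) : D :=
  l.foldr (fun i y => φ i y) x

/-- if the reduction functions `φ₁, …, φ_k` on a
meet-semilattice are idempotent and pairwise independent
(`φ_i (φ_j x) = φ_j (φ_i x) = φ_i x ⊓ φ_j x` for `i ≠ j`),
then their decoupling map is idempotent. -/
theorem decouple_idempotent_of_independent {D : Type*} [SemilatticeInf D]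
    {k : ℕ} (hk : 0 < k) (φ : Fin k → D → D)
    (hcontr : ∀ i, ∀ x : D, φ i x ≤ x)
    (hmono : ∀ i, Monotone (φ i))
    (hidem : ∀ i, φ i ∘ φ i = φ i)
    (hindep : ∀ i j : Fin k, i ≠ j → ∀ x : D,
      φ i (φ j x) = φ j (φ i x) ∧ φ j (φ i x) = φ i x ⊓ φ j x) :
    ∀ x : D, decouple hk φ (decouple hk φ x) = decouple hk φ x := by
  intro x
  set C : List (Fin k) → D → D := decoupleComp φ with hCdef
  have hcons : ∀ (j : Fin k) (l : List (Fin k)) (x : D), C (j :: l) x = φ j (C l x) :=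
    fun _ _ _ => rfl
  have contr : ∀ l (x : D), C l x ≤ x := by
    intro l
    induction l with
    | nil => intro x; exact le_refl x
    | cons i l ih => intro x; exact (hcontr i _).trans (ih x)
  have comm : ∀ l (i : Fin k), i ∉ l → ∀ x, φ i (C l x) = C l (φ i x) := by
    intro l
    induction l with
    | nil => intro i _ x; rfl
    | cons j l ih =>
      intro i hi x
      have hij : i ≠ j := fun h => hi (h ▸ List.mem_cons_self)
      rw [hcons, hcons, (hindep i j hij (C l x)).1,
        ih i (fun h => hi (List.mem_cons_of_mem _ h)) x]
  have fix : ∀ l (i : Fin k), i ∈ l → ∀ x, φ i (C l x) = C l x := by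
    intro l
    induction l with
    | nil => intro i hi; exact absurd hi (List.not_mem_nil)
    | cons j l ih =>
      intro i hi x
      rw [hcons]
      by_cases hij : i = j
      · subst hij; exact congrFun (hidem i) (C l x)
      · have h : i ∈ l := by
          rcases List.mem_cons.mp hi with h | h
          · exact absurd h hij
          · exact h
        rw [(hindep i j hij (C l x)).1, ih i h x]
  have lb : ∀ l (i : Fin k), i ∈ l → ∀ x, C l x ≤ φ i x := by
    intro l
    induction l with
    | nil => intro i hi; exact absurd hi (List.not_mem_nil)
    | cons j l ih =>
      intro i hi x
      rw [hcons]
      rcases List.mem_cons.mp hi with h | h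
      · subst h; exact hmono i (contr l x)
      · exact (hcontr j _).trans (ih i h x)
  have glb : ∀ l, l.Nodup → l ≠ [] → ∀ (x y : D), (∀ j ∈ l, y ≤ φ j x) → y ≤ C l x := by
    intro l
    induction l with
    | nil => intro _ h; exact absurd rfl h
    | cons j l ih =>
      intro hnd _ x y hy
      have hjl : j ∉ l := (List.nodup_cons.mp hnd).1
      rw [hcons]
      rcases eq_or_ne l [] with hl | hl
      · subst hl
        exact hy j (List.mem_cons_self)
      · rw [comm l j hjl x]
        refine ih (List.nodup_cons.mp hnd).2 hl (φ j x) y ?_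
        intro m hm
        have hmj : m ≠ j := fun h => hjl (h ▸ hm)
        have : φ m (φ j x) = φ m x ⊓ φ j x :=
          ((hindep m j hmj x).1).trans (hindep m j hmj x).2
        rw [this]
        exact le_inf (hy m (List.mem_cons_of_mem _ hm)) (hy j (List.mem_cons_self))
  -- relate C of the full list to decouple
  set L := (Finset.univ : Finset (Fin k)).toList with hL
  have hne : L ≠ [] := by
    simp [hL, Finset.toList_eq_nil, Finset.univ_eq_empty_iff]
    exact Fin.pos_iff_nonempty.mp hk
  have hmemL : ∀ i : Fin k, i ∈ L := fun i => Finset.mem_toList.mpr (Finset.mem_univ i)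
  have hCm : C L x = decouple hk φ x := by
    refine le_antisymm ?_ ?_
    · exact Finset.le_inf' _ _ fun i _ => lb L i (hmemL i) x
    · exact glb L (Finset.nodup_toList _) hne x _ (fun j _ => Finset.inf'_le _ (Finset.mem_univ j))
  have hfix : ∀ i : Fin k, φ i (decouple hk φ x) = decouple hk φ x := by
    intro i
    rw [← hCm]
    exact fix L i (hmemL i) x
  show Finset.univ.inf' _ (fun i => φ i (decouple hk φ x)) = decouple hk φ x
  rw [show (fun i => φ i (decouple hk φ x)) = fun _ : Fin k => decouple hk φ x from
    funext fun i => hfix i, Finset.inf'_const]
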